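/- Let n ≥ 5 and let C_n be the cycle graph on vertex set {1,2,…,n} with edges {i, i+1} for 1 ≤ i < n and the edge {n, 1}. For every reliability vector p : {1,…,n} → [0,1], the Shapley value of vertex 1 in the reliability extension of Γ_{NC1} on C_n equals Sh[v̄_{NC1}](1) = p_1 · ( (p_2·p_n + p_2·p_3 + p_{n−1}·p_n)/3 − (p_3 + p_{n−1})/2 − p_2 − p_n + 3 ). -/

import Mathlib

open Finset

attribute [local instance] Classical.propDecidable

noncomputable section

/-- `Π_{T,S}(p) = (∏_{i∈T} p i) * (∏_{i∈S\T} (1 - p i))`. -/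
def prodPi {α : Type*} (p : α → ℝ) (T S : Finset α) : ℝ :=
  (∏ i ∈ T, p i) * (∏ i ∈ S \ T, (1 - p i))

/-- Reliability extension of a TU-game. -/
def relExt {α : Type*} (p : α → ℝ) (v : Finset α → ℝ) (S : Finset α) : ℝ :=
  ∑ T ∈ S.powerset, v T * prodPi p T S

/-- The set of players preceding `x` in the ordering `σ`. -/
def precedingSet {α : Type*} [Fintype α] (σ : Fin (Fintype.card α) ≃ α) (x : α) : Finset α :=
  Finset.univ.filter fun y => σ.symm y < σ.symm x

/-- The Shapley value of player `x` in the TU-game `v`. -/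
def shapley {α : Type*} [Fintype α] (v : Finset α → ℝ) (x : α) : ℝ :=
  (1 / ((Fintype.card α).factorial : ℝ)) *
    ∑ σ : Fin (Fintype.card α) ≃ α,
      (v (insert x (precedingSet σ x)) - v (precedingSet σ x))

/-- The (open) neighborhood of `v` as a finset. -/
def nbhd {α : Type*} [Fintype α] (G : SimpleGraph α) (v : α) : Finset α :=
  Finset.univ.filter fun y => G.Adj v y

/-- `N̂(v) = {v} ∪ N(v)`. -/
def closedNbhd {α : Type*} [Fintype α] (G : SimpleGraph α) (v : α) : Finset α :=
  insert v (nbhd G v)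

/-- `δ(S)`: vertices outside `S` having a neighbor in `S`. -/
def extBoundary {α : Type*} [Fintype α] (G : SimpleGraph α) (S : Finset α) : Finset α :=
  Finset.univ.filter fun y => y ∉ S ∧ ∃ x ∈ S, G.Adj x y

/-- The network centrality game `Γ_{NC1}`: `v(S) = |S ∪ δ(S)|`. -/
def vNC1 {α : Type*} [Fintype α] (G : SimpleGraph α) (S : Finset α) : ℝ :=
  ((S ∪ extBoundary G S).card : ℝ)

/-- The cycle graph on `Fin n`. -/
def cycleGraph (n : ℕ) : SimpleGraph (Fin n) :=
  SimpleGraph.fromRel (fun i j => (i.val + 1) % n = j.val)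

/-! ### Auxiliary lemmas -/

section Aux

variable {α : Type*} [Fintype α]

lemma sum_prodPi (p : α → ℝ) (S : Finset α) :
    ∑ T ∈ S.powerset, prodPi p T S = 1 := by
  unfold prodPi
  rw [← Finset.prod_add]
  simp

lemma sum_prodPi_disj (p : α → ℝ) (S A : Finset α) :
    ∑ T ∈ S.powerset, (if T ∩ A = ∅ then (1:ℝ) else 0) * prodPi p T S
      = ∏ i ∈ S ∩ A, (1 - p i) := by
  simp only [ite_mul, one_mul, zero_mul]
  rw [← Finset.sum_filter]
  have h1 : S.powerset.filter (fun T => T ∩ A = ∅) = (S \ A).powerset := by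
    ext T
    simp [Finset.subset_sdiff, Finset.mem_powerset, Finset.disjoint_iff_inter_eq_empty]
  rw [h1]
  have h2 : ∀ T ∈ (S \ A).powerset, prodPi p T S = prodPi p T (S \ A) * ∏ i ∈ S ∩ A, (1 - p i) := by
    intro T hT
    rw [Finset.mem_powerset] at hT
    unfold prodPi
    have : S \ T = ((S \ A) \ T) ∪ (S ∩ A) := by
      ext x
      simp only [Finset.mem_sdiff, Finset.mem_union, Finset.mem_inter]
      constructor
      · intro ⟨hxS, hxT⟩
        by_cases hxA : x ∈ A
        · exact Or.inr ⟨hxS, hxA⟩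
        · exact Or.inl ⟨⟨hxS, hxA⟩, hxT⟩
      · rintro (⟨⟨hxS, _⟩, hxT⟩ | ⟨hxS, hxA⟩)
        · exact ⟨hxS, hxT⟩
        · exact ⟨hxS, fun hxT => (Finset.mem_sdiff.mp (hT hxT)).2 hxA⟩
    rw [this, Finset.prod_union]
    · ring
    · rw [Finset.disjoint_left]
      rintro x hx hx2
      simp only [Finset.mem_sdiff, Finset.mem_inter] at hx hx2
      exact hx.1.2 hx2.2
  rw [Finset.sum_congr rfl h2, ← Finset.sum_mul, sum_prodPi, one_mul]

lemma vNC1_eq (G : SimpleGraph α) (T : Finset α) :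
    vNC1 G T = ∑ v : α, (1 - if T ∩ closedNbhd G v = ∅ then (1:ℝ) else 0) := by
  have h : T ∪ extBoundary G T = Finset.univ.filter (fun v => ¬ (T ∩ closedNbhd G v = ∅)) := by
    ext v
    simp only [Finset.mem_union, extBoundary, Finset.mem_filter, Finset.mem_univ, true_and,
      ← Finset.nonempty_iff_ne_empty, ne_eq, Finset.Nonempty, Finset.mem_inter, closedNbhd,
      Finset.mem_insert, nbhd]
    constructor
    · rintro (hv | ⟨hv, x, hx, hadj⟩)
      · exact ⟨v, hv, Or.inl rfl⟩
      · exact ⟨x, hx, Or.inr hadj.symm⟩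
    · rintro ⟨x, hxT, hx | hx⟩
      · exact Or.inl (hx ▸ hxT)
      · by_cases hvT : v ∈ T
        · exact Or.inl hvT
        · exact Or.inr ⟨hvT, x, hxT, hx.symm⟩
  rw [vNC1, h, Finset.card_filter]
  push_cast
  refine Finset.sum_congr rfl fun v _ => ?_
  by_cases hc : T ∩ closedNbhd G v = ∅ <;> simp [hc]

lemma relExt_vNC1 (G : SimpleGraph α) (p : α → ℝ) (S : Finset α) :
    relExt p (vNC1 G) S = ∑ v : α, (1 - ∏ i ∈ S ∩ closedNbhd G v, (1 - p i)) := by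
  unfold relExt
  calc ∑ T ∈ S.powerset, vNC1 G T * prodPi p T S
      = ∑ T ∈ S.powerset, ∑ v : α,
          (prodPi p T S - (if T ∩ closedNbhd G v = ∅ then (1:ℝ) else 0) * prodPi p T S) := by
        refine Finset.sum_congr rfl fun T _ => ?_
        rw [vNC1_eq, Finset.sum_mul]
        refine Finset.sum_congr rfl fun v _ => ?_
        ring
    _ = ∑ v : α, ∑ T ∈ S.powerset,
          (prodPi p T S - (if T ∩ closedNbhd G v = ∅ then (1:ℝ) else 0) * prodPi p T S) :=
        Finset.sum_comm
    _ = ∑ v : α, (1 - ∏ i ∈ S ∩ closedNbhd G v, (1 - p i)) := by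
        refine Finset.sum_congr rfl fun v _ => ?_
        rw [Finset.sum_sub_distrib, sum_prodPi, sum_prodPi_disj]

lemma marginal (G : SimpleGraph α) (p : α → ℝ) (x : α) (S : Finset α)
    (hx : x ∉ S) :
    relExt p (vNC1 G) (insert x S) - relExt p (vNC1 G) S
      = ∑ v : α, (if x ∈ closedNbhd G v then p x * ∏ i ∈ S ∩ closedNbhd G v, (1 - p i) else 0) := by
  rw [relExt_vNC1, relExt_vNC1, ← Finset.sum_sub_distrib]
  refine Finset.sum_congr rfl fun v _ => ?_
  by_cases hv : x ∈ closedNbhd G v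
  · have h1 : insert x S ∩ closedNbhd G v = insert x (S ∩ closedNbhd G v) := by
      rw [Finset.insert_inter_of_mem hv]
    have h2 : x ∉ S ∩ closedNbhd G v := fun h => hx (Finset.mem_inter.mp h).1
    rw [if_pos hv, h1, Finset.prod_insert h2]
    ring
  · have h1 : insert x S ∩ closedNbhd G v = S ∩ closedNbhd G v := by
      rw [Finset.insert_inter_of_notMem hv]
    rw [if_neg hv, h1]
    ring

def cnt (x y z : α) : ℝ :=
  ∑ σ : Fin (Fintype.card α) ≃ α, if σ.symm x < σ.symm y ∧ σ.symm y < σ.symm z then 1 else 0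

lemma sum_reindex (π : Equiv.Perm α) (F : (Fin (Fintype.card α) ≃ α) → ℝ) :
    ∑ σ : Fin (Fintype.card α) ≃ α, F (σ.trans π) = ∑ σ : Fin (Fintype.card α) ≃ α, F σ := by
  apply Fintype.sum_bijective (fun σ => σ.trans π)
  · constructor
    · intro σ1 σ2 h
      have := congrArg (fun τ => τ.trans π.symm) h
      simpa [Equiv.trans_assoc] using this
    · intro τ
      exact ⟨τ.trans π.symm, by simp [Equiv.trans_assoc]⟩
  · intro σ; rfl

lemma cnt_swap (u v x y z : α) :
    cnt x y z = cnt (Equiv.swap u v x) (Equiv.swap u v y) (Equiv.swap u v z) := by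
  unfold cnt
  rw [← sum_reindex (Equiv.swap u v)
    (fun σ => if σ.symm (Equiv.swap u v x) < σ.symm (Equiv.swap u v y) ∧
        σ.symm (Equiv.swap u v y) < σ.symm (Equiv.swap u v z) then 1 else 0)]
  refine Finset.sum_congr rfl fun σ _ => ?_
  simp [Equiv.symm_trans_apply, Equiv.symm_swap, Equiv.swap_apply_self]

lemma cnt_eq_all (x y z : α) (hxy : x ≠ y) (hyz : y ≠ z) (hxz : x ≠ z) :
    cnt y x z = cnt x y z ∧ cnt x z y = cnt x y z ∧ cnt z y x = cnt x y z ∧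
    cnt y z x = cnt x y z ∧ cnt z x y = cnt x y z := by
  have h1 : cnt x y z = cnt y x z := by
    have := cnt_swap x y x y z
    simpa [Equiv.swap_apply_left, Equiv.swap_apply_right, Equiv.swap_apply_of_ne_of_ne hxz.symm hyz.symm] using this
  have h2 : cnt x y z = cnt x z y := by
    have := cnt_swap y z x y z
    simpa [Equiv.swap_apply_left, Equiv.swap_apply_right, Equiv.swap_apply_of_ne_of_ne hxy hxz] using this
  have h3 : cnt x y z = cnt z y x := by
    have := cnt_swap x z x y z
    simpa [Equiv.swap_apply_left, Equiv.swap_apply_right, Equiv.swap_apply_of_ne_of_ne hxy.symm hyz] using this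
  have h4 : cnt x y z = cnt y z x := by rw [h1]; rw [show cnt y x z = cnt y z x from by
    have := cnt_swap x z y x z
    simpa [Equiv.swap_apply_left, Equiv.swap_apply_right, Equiv.swap_apply_of_ne_of_ne hxy.symm hyz] using this]
  have h5 : cnt x y z = cnt z x y := by rw [h2]; rw [show cnt x z y = cnt z x y from by
    have := cnt_swap x z x z y
    simpa [Equiv.swap_apply_left, Equiv.swap_apply_right, Equiv.swap_apply_of_ne_of_ne hxy.symm hyz] using this]
  exact ⟨h1.symm, h2.symm, h3.symm, h4.symm, h5.symm⟩

lemma six_orders (A B C : ℕ) (h1 : A ≠ B) (h2 : B ≠ C) (h3 : A ≠ C) :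
    ((if A < B ∧ B < C then (1:ℝ) else 0) + (if A < C ∧ C < B then 1 else 0) +
     (if B < A ∧ A < C then 1 else 0) + (if B < C ∧ C < A then 1 else 0) +
     (if C < A ∧ A < B then 1 else 0) + (if C < B ∧ B < A then 1 else 0)) = 1 := by
  split_ifs <;> first | (exfalso; omega) | norm_num

lemma cnt_total (x y z : α) (hxy : x ≠ y) (hyz : y ≠ z) (hxz : x ≠ z) :
    cnt x y z + cnt x z y + cnt y x z + cnt y z x + cnt z x y + cnt z y x
      = ((Fintype.card α).factorial : ℝ) := by
  unfold cnt
  rw [← Finset.sum_add_distrib, ← Finset.sum_add_distrib, ← Finset.sum_add_distrib,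
    ← Finset.sum_add_distrib, ← Finset.sum_add_distrib]
  have hcard : ∀ σ : Fin (Fintype.card α) ≃ α,
      ((if σ.symm x < σ.symm y ∧ σ.symm y < σ.symm z then (1:ℝ) else 0) +
       (if σ.symm x < σ.symm z ∧ σ.symm z < σ.symm y then 1 else 0) +
       (if σ.symm y < σ.symm x ∧ σ.symm x < σ.symm z then 1 else 0) +
       (if σ.symm y < σ.symm z ∧ σ.symm z < σ.symm x then 1 else 0) +
       (if σ.symm z < σ.symm x ∧ σ.symm x < σ.symm y then 1 else 0) +
       (if σ.symm z < σ.symm y ∧ σ.symm y < σ.symm x then 1 else 0)) = 1 := by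
    intro σ
    have dxy : σ.symm x ≠ σ.symm y := fun h => hxy (σ.symm.injective h)
    have dyz : σ.symm y ≠ σ.symm z := fun h => hyz (σ.symm.injective h)
    have dxz : σ.symm x ≠ σ.symm z := fun h => hxz (σ.symm.injective h)
    rw [Fin.ne_iff_vne] at dxy dyz dxz
    simp only [Fin.lt_def]
    exact six_orders _ _ _ dxy dyz dxz
  rw [Finset.sum_congr rfl (fun σ _ => hcard σ), Finset.sum_const, nsmul_eq_mul, mul_one]
  rw [Finset.card_univ, Fintype.card_equiv (Fintype.equivFin α).symm, Fintype.card_fin]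

lemma cnt_sixth (x y z : α) (hxy : x ≠ y) (hyz : y ≠ z) (hxz : x ≠ z) :
    cnt x y z = ((Fintype.card α).factorial : ℝ) / 6 := by
  have e := cnt_eq_all x y z hxy hyz hxz
  have t := cnt_total x y z hxy hyz hxz
  rw [e.1, e.2.1, e.2.2.1, e.2.2.2.1, e.2.2.2.2] at t
  linarith

lemma pair_pointwise (A B C : ℕ) (h1 : A ≠ B) (h2 : B ≠ C) (h3 : A ≠ C) (qx qy : ℝ) :
    (if A < C then qx else 1) * (if B < C then qy else 1) =
      qx * qy * ((if A < B ∧ B < C then 1 else 0) + (if B < A ∧ A < C then 1 else 0)) +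
      qx * (if A < C ∧ C < B then 1 else 0) + qy * (if B < C ∧ C < A then 1 else 0) +
      ((if C < A ∧ A < B then 1 else 0) + (if C < B ∧ B < A then 1 else 0)) := by
  split_ifs <;> first | (exfalso; omega) | ring

lemma pair_sum (x y z : α) (hxy : x ≠ y) (hyz : y ≠ z) (hxz : x ≠ z) (qx qy : ℝ) :
    ∑ σ : Fin (Fintype.card α) ≃ α,
        (if σ.symm x < σ.symm z then qx else 1) * (if σ.symm y < σ.symm z then qy else 1)
      = (2 * qx * qy + qx + qy + 2) * cnt x y z := by
  have hpt : ∀ σ : Fin (Fintype.card α) ≃ α,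
      (if σ.symm x < σ.symm z then qx else 1) * (if σ.symm y < σ.symm z then qy else 1) =
      qx * qy * ((if σ.symm x < σ.symm y ∧ σ.symm y < σ.symm z then (1:ℝ) else 0) +
          (if σ.symm y < σ.symm x ∧ σ.symm x < σ.symm z then 1 else 0)) +
      qx * (if σ.symm x < σ.symm z ∧ σ.symm z < σ.symm y then 1 else 0) +
      qy * (if σ.symm y < σ.symm z ∧ σ.symm z < σ.symm x then 1 else 0) +
      ((if σ.symm z < σ.symm x ∧ σ.symm x < σ.symm y then 1 else 0) +
          (if σ.symm z < σ.symm y ∧ σ.symm y < σ.symm x then 1 else 0)) := by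
    intro σ
    have dxy : σ.symm x ≠ σ.symm y := fun h => hxy (σ.symm.injective h)
    have dyz : σ.symm y ≠ σ.symm z := fun h => hyz (σ.symm.injective h)
    have dxz : σ.symm x ≠ σ.symm z := fun h => hxz (σ.symm.injective h)
    rw [Fin.ne_iff_vne] at dxy dyz dxz
    simp only [Fin.lt_def]
    exact pair_pointwise _ _ _ dxy dyz dxz qx qy
  rw [Finset.sum_congr rfl (fun σ _ => hpt σ)]
  rw [Finset.sum_add_distrib, Finset.sum_add_distrib, Finset.sum_add_distrib,
    Finset.sum_add_distrib, ← Finset.mul_sum, ← Finset.mul_sum, ← Finset.mul_sum,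
    Finset.sum_add_distrib]
  have e := cnt_eq_all x y z hxy hyz hxz
  show qx * qy * (cnt x y z + cnt y x z) + qx * cnt x z y + qy * cnt y z x +
      (cnt z x y + cnt z y x) = _
  rw [e.1, e.2.1, e.2.2.1, e.2.2.2.1, e.2.2.2.2]
  ring

lemma ite_irrel {β : Sort*} {P : Prop} (i1 : Decidable P) [i2 : Decidable P] (a b : β) :
    @ite β P i1 a b = if P then a else b := by
  have h : i1 = i2 := Subsingleton.elim _ _
  rw [h]

lemma insert_irrel {α : Type*} (i1 : DecidableEq α) [i2 : DecidableEq α] (a : α) (s : Finset α) :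
    @insert α (Finset α) (@Finset.instInsert α i1) a s = insert a s := by
  have h : i1 = i2 := by
    funext x y
    exact Subsingleton.elim _ _
  subst h
  rfl

lemma inter_insert_of_not_mem (S B : Finset α) (a : α) (ha : a ∉ S) :
    S ∩ insert a B = S ∩ B := by
  ext x
  simp only [Finset.mem_inter, Finset.mem_insert]
  constructor
  · rintro ⟨hxS, rfl | hxB⟩
    · exact absurd hxS ha
    · exact ⟨hxS, hxB⟩
  · rintro ⟨hxS, hxB⟩
    exact ⟨hxS, Or.inr hxB⟩

lemma prod_inter_pair (S : Finset α) (a b : α) (hab : a ≠ b) (g : α → ℝ) :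
    ∏ i ∈ S ∩ ({a, b} : Finset α), g i
      = (if a ∈ S then g a else 1) * (if b ∈ S then g b else 1) := by
  rw [Finset.inter_comm, ← Finset.filter_mem_eq_inter, Finset.prod_filter]
  rw [Finset.prod_insert (by simp [hab]), Finset.prod_singleton]

end Aux

section Cycle

lemma mem_closedNbhd_cycle {n : ℕ} (u v : Fin n) :
    u ∈ closedNbhd (cycleGraph n) v ↔
      u = v ∨ (v.val + 1) % n = u.val ∨ (u.val + 1) % n = v.val := by
  simp only [closedNbhd, nbhd, Finset.mem_insert, Finset.mem_filter, Finset.mem_univ, true_and,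
    cycleGraph, SimpleGraph.fromRel_adj]
  constructor
  · rintro (h | ⟨-, h | h⟩)
    · exact Or.inl h
    · exact Or.inr (Or.inl h)
    · exact Or.inr (Or.inr h)
  · rintro (h | h)
    · exact Or.inl h
    · by_cases huv : u = v
      · exact Or.inl huv
      · exact Or.inr ⟨fun h' => huv h'.symm, h⟩

lemma succ_mod {n : ℕ} (a b : ℕ) (ha : a < n) :
    (a + 1) % n = b ↔ ((a + 1 = n ∧ b = 0) ∨ (a + 1 < n ∧ b = a + 1)) := by
  by_cases h : a + 1 = n
  · rw [h, Nat.mod_self]; omega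
  · rw [Nat.mod_eq_of_lt (by omega)]; omega

lemma cnbhd0_mem {n : ℕ} (hn : 5 ≤ n) (u : Fin n) :
    u ∈ closedNbhd (cycleGraph n) ⟨0, by have := hn; omega⟩ ↔
      (u = ⟨0, by have := hn; omega⟩ ∨ u = ⟨1, by have := hn; omega⟩ ∨ u = ⟨n - 1, by have := hn; omega⟩) := by
  rw [mem_closedNbhd_cycle]
  simp only [Fin.ext_iff]
  rw [succ_mod 0 u.val (by omega), succ_mod u.val 0 u.isLt]
  have := u.isLt
  omega

lemma cnbhd1_mem {n : ℕ} (hn : 5 ≤ n) (u : Fin n) :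
    u ∈ closedNbhd (cycleGraph n) ⟨1, by have := hn; omega⟩ ↔
      (u = ⟨0, by have := hn; omega⟩ ∨ u = ⟨1, by have := hn; omega⟩ ∨ u = ⟨2, by have := hn; omega⟩) := by
  rw [mem_closedNbhd_cycle]
  simp only [Fin.ext_iff]
  rw [succ_mod 1 u.val (by omega), succ_mod u.val 1 u.isLt]
  have := u.isLt
  omega

lemma cnbhdn1_mem {n : ℕ} (hn : 5 ≤ n) (u : Fin n) :
    u ∈ closedNbhd (cycleGraph n) ⟨n - 1, by have := hn; omega⟩ ↔
      (u = ⟨0, by have := hn; omega⟩ ∨ u = ⟨n - 2, by have := hn; omega⟩ ∨ u = ⟨n - 1, by have := hn; omega⟩) := by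
  rw [mem_closedNbhd_cycle]
  simp only [Fin.ext_iff]
  rw [succ_mod (n-1) u.val (by omega), succ_mod u.val (n-1) u.isLt]
  have := u.isLt
  omega

lemma mem_cnbhd_zero {n : ℕ} (hn : 5 ≤ n) (v : Fin n) :
    (⟨0, by have := hn; omega⟩ : Fin n) ∈ closedNbhd (cycleGraph n) v ↔
      v = ⟨0, by have := hn; omega⟩ ∨ v = ⟨1, by have := hn; omega⟩ ∨ v = ⟨n - 1, by have := hn; omega⟩ := by
  rw [mem_closedNbhd_cycle]
  simp only [Fin.ext_iff]
  rw [succ_mod v.val 0 v.isLt, succ_mod 0 v.val (by omega)]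
  have := v.isLt
  omega

end Cycle

set_option maxHeartbeats 2000000 in
theorem stmt_12 (n : ℕ) (hn : 5 ≤ n)
    (p : Fin n → ℝ) (hp : ∀ i, p i ∈ Set.Icc (0 : ℝ) 1) :
    shapley (relExt p (vNC1 (cycleGraph n))) ⟨0, by omega⟩ =
      p ⟨0, by omega⟩ *
        ((p ⟨1, by omega⟩ * p ⟨n - 1, by omega⟩ + p ⟨1, by omega⟩ * p ⟨2, by omega⟩ +
            p ⟨n - 2, by omega⟩ * p ⟨n - 1, by omega⟩) / 3 -
          (p ⟨2, by omega⟩ + p ⟨n - 2, by omega⟩) / 2 -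
          p ⟨1, by omega⟩ - p ⟨n - 1, by omega⟩ + 3) := by
  letI : DecidableEq (Fin n) := fun a b => Classical.propDecidable (a = b)
  have h0n : 0 < n := by omega
  set A0 : Fin n := ⟨0, by omega⟩ with hA0
  set A1 : Fin n := ⟨1, by omega⟩ with hA1
  set A2 : Fin n := ⟨2, by omega⟩ with hA2
  set B2 : Fin n := ⟨n - 2, by omega⟩ with hB2
  set B1 : Fin n := ⟨n - 1, by omega⟩ with hB1
  have d01 : A0 ≠ A1 := by simp only [hA0, hA1, Ne, Fin.mk.injEq]; omega
  have d02 : A0 ≠ A2 := by simp only [hA0, hA2, Ne, Fin.mk.injEq]; omega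
  have d0b2 : A0 ≠ B2 := by simp only [hA0, hB2, Ne, Fin.mk.injEq]; omega
  have d0b1 : A0 ≠ B1 := by simp only [hA0, hB1, Ne, Fin.mk.injEq]; omega
  have d12 : A1 ≠ A2 := by simp only [hA1, hA2, Ne, Fin.mk.injEq]; omega
  have d1b2 : A1 ≠ B2 := by simp only [hA1, hB2, Ne, Fin.mk.injEq]; omega
  have d1b1 : A1 ≠ B1 := by simp only [hA1, hB1, Ne, Fin.mk.injEq]; omega
  have db2b1 : B2 ≠ B1 := by simp only [hB2, hB1, Ne, Fin.mk.injEq]; omega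
  have key : ∀ σ : Fin (Fintype.card (Fin n)) ≃ Fin n,
      relExt p (vNC1 (cycleGraph n)) (insert A0 (precedingSet σ A0))
        - relExt p (vNC1 (cycleGraph n)) (precedingSet σ A0)
      = p A0 *
        ((if σ.symm A1 < σ.symm A0 then 1 - p A1 else 1) *
            (if σ.symm B1 < σ.symm A0 then 1 - p B1 else 1) +
         (if σ.symm A1 < σ.symm A0 then 1 - p A1 else 1) *
            (if σ.symm A2 < σ.symm A0 then 1 - p A2 else 1) +
         (if σ.symm B2 < σ.symm A0 then 1 - p B2 else 1) *
            (if σ.symm B1 < σ.symm A0 then 1 - p B1 else 1)) := by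
    intro σ
    have hnm : A0 ∉ precedingSet σ A0 := by simp [precedingSet]
    rw [marginal _ _ _ _ hnm]
    have hite : ∀ v : Fin n,
        (if A0 ∈ closedNbhd (cycleGraph n) v then
            p A0 * ∏ i ∈ precedingSet σ A0 ∩ closedNbhd (cycleGraph n) v, (1 - p i) else 0)
        = ((if v = A0 then
              p A0 * ∏ i ∈ precedingSet σ A0 ∩ closedNbhd (cycleGraph n) A0, (1 - p i) else 0)
          + (if v = A1 then
              p A0 * ∏ i ∈ precedingSet σ A0 ∩ closedNbhd (cycleGraph n) A1, (1 - p i) else 0))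
          + (if v = B1 then
              p A0 * ∏ i ∈ precedingSet σ A0 ∩ closedNbhd (cycleGraph n) B1, (1 - p i) else 0) := by
      intro v
      by_cases h : A0 ∈ closedNbhd (cycleGraph n) v
      · rw [if_pos h]
        have hv := (mem_cnbhd_zero hn v).mp h
        rw [← hA0, ← hA1, ← hB1] at hv
        rcases hv with rfl | rfl | rfl
        · rw [if_pos rfl, if_neg d01, if_neg d0b1]; ring
        · rw [if_pos rfl, if_neg d01.symm, if_neg d1b1]; ring
        · rw [if_pos rfl, if_neg d0b1.symm, if_neg d1b1.symm]; ring
      · have hv : ¬(v = A0 ∨ v = A1 ∨ v = B1) := by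
          rw [hA0, hA1, hB1]
          exact fun hc => h ((mem_cnbhd_zero hn v).mpr hc)
        push_neg at hv
        rw [if_neg h, if_neg hv.1, if_neg hv.2.1, if_neg hv.2.2]
        ring
    rw [Finset.sum_congr rfl (fun v _ => hite v), Finset.sum_add_distrib,
      Finset.sum_add_distrib, Finset.sum_ite_eq' Finset.univ A0, Finset.sum_ite_eq' Finset.univ A1,
      Finset.sum_ite_eq' Finset.univ B1]
    simp only [Finset.mem_univ, ite_true]
    have hN0 : closedNbhd (cycleGraph n) A0 = insert A0 {A1, B1} := by
      ext u
      simp only [Finset.mem_insert, Finset.mem_singleton]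
      rw [hA0, hA1, hB1]
      exact cnbhd0_mem hn u
    have hN1 : closedNbhd (cycleGraph n) A1 = insert A0 {A1, A2} := by
      ext u
      simp only [Finset.mem_insert, Finset.mem_singleton]
      rw [hA0, hA1, hA2]
      exact cnbhd1_mem hn u
    have hNb1 : closedNbhd (cycleGraph n) B1 = insert A0 {B2, B1} := by
      ext u
      simp only [Finset.mem_insert, Finset.mem_singleton]
      rw [hA0, hB2, hB1]
      exact cnbhdn1_mem hn u
    rw [hN0, hN1, hNb1]
    rw [inter_insert_of_not_mem _ _ _ hnm, inter_insert_of_not_mem _ _ _ hnm,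
      inter_insert_of_not_mem _ _ _ hnm]
    rw [prod_inter_pair _ _ _ d1b1, prod_inter_pair _ _ _ d12, prod_inter_pair _ _ _ db2b1]
    simp only [precedingSet, Finset.mem_filter, Finset.mem_univ, true_and]
    ring
  unfold shapley
  rw [Finset.sum_congr rfl (fun σ _ => key σ)]
  rw [← Finset.mul_sum, Finset.sum_add_distrib, Finset.sum_add_distrib]
  rw [pair_sum A1 B1 A0 d1b1 d0b1.symm d01.symm, pair_sum A1 A2 A0 d12 d02.symm d01.symm,
    pair_sum B2 B1 A0 db2b1 d0b1.symm d0b2.symm]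
  rw [cnt_sixth A1 B1 A0 d1b1 d0b1.symm d01.symm, cnt_sixth A1 A2 A0 d12 d02.symm d01.symm,
    cnt_sixth B2 B1 A0 db2b1 d0b1.symm d0b2.symm]
  have hM : ((Fintype.card (Fin n)).factorial : ℝ) ≠ 0 := by
    exact_mod_cast Nat.factorial_ne_zero _
  field_simp
  ring

end
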